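/- Let ν ∈ ℝ with ν > −1 and 0 < a₁ ≤ a_j. Let γ : ℝ → ℂ be a continuously differentiable curve such that: |γ'(u)| ≤ M for all u; γ(u) ∉ (−∞, 0] for all u; |γ(u)| ≥ r > 0 for all u; Re γ(u) ≤ −c|u| + C for all u, with constants c > 0 and C; and inf_{u,v ∈ ℝ} |γ(u) − 1/γ(v)| ≥ d > 0. Then the double integral ∬_{ℝ×ℝ} | (1/γ(v))^{ν} · exp( −a_j/γ(v) + γ(v)/4 ) · exp( γ(u)·(a_j − a₁/2) ) / ( γ(u) − 1/γ(v) ) |² · |γ'(u)| · |γ'(v)|/|γ(v)|² du dv is finite, where z^{ν} := exp(ν Log z) with the principal logarithm. -/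

import Mathlib

open MeasureTheory

open Set in
lemma integrable_exp_neg_mul_abs' {b : ℝ} (hb : 0 < b) :
    Integrable (fun x : ℝ => Real.exp (-b * |x|)) := by
  have h1 : IntegrableOn (fun x : ℝ => Real.exp (-b * |x|)) (Ioi 0) := by
    refine (exp_neg_integrableOn_Ioi 0 hb).congr_fun ?_ measurableSet_Ioi
    intro x hx
    simp only []
    rw [abs_of_pos (mem_Ioi.mp hx)]
  have h2 : IntegrableOn (fun x : ℝ => Real.exp (-b * |x|)) (Iio 0) := by
    have h := (MeasurePreserving.integrableOn_comp_preimage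
      (Measure.measurePreserving_neg (volume : Measure ℝ))
      (Homeomorph.neg ℝ).measurableEmbedding).2 h1
    have heq : ((Neg.neg : ℝ → ℝ) ⁻¹' Ioi (0:ℝ)) = Iio 0 := by ext x; simp
    have hfun : (fun x : ℝ => Real.exp (-b * |x|)) ∘ (Neg.neg : ℝ → ℝ)
        = fun x : ℝ => Real.exp (-b * |x|) := by
      funext x; simp [Function.comp, abs_neg]
    rwa [heq, hfun] at h
  have h4 : IntegrableOn (fun x : ℝ => Real.exp (-b * |x|)) (Ici 0) := by
    rwa [integrableOn_Ici_iff_integrableOn_Ioi]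
  have := h2.union h4
  rwa [Iio_union_Ici, integrableOn_univ] at this

set_option maxHeartbeats 1000000 in
/-- square-integrability (Hilbert–Schmidt property) of the kernel
`ℬ_{a_j}(s,t) = (2πi)⁻¹ s^{ν} e^{−a_j s + 1/(4s)} e^{t(a_j − a₁/2)}(t−s)⁻¹`
along the parametrized contours `t = γ(u)`, `s = 1/γ(v)`. -/
theorem besselB_kernel_square_integrable
    (ν a₁ aj : ℝ) (hν : -1 < ν) (ha₁ : 0 < a₁) (haj : a₁ ≤ aj)
    (γ : ℝ → ℂ) (hγ : ContDiff ℝ 1 γ)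
    (M : ℝ) (hM : ∀ u : ℝ, ‖deriv γ u‖ ≤ M)
    (hcut : ∀ u : ℝ, γ u ∉ Complex.ofReal '' Set.Iic (0 : ℝ))
    (r : ℝ) (hr : 0 < r) (hlow : ∀ u : ℝ, r ≤ ‖γ u‖)
    (c C : ℝ) (hc : 0 < c) (hre : ∀ u : ℝ, (γ u).re ≤ -c * |u| + C)
    (d : ℝ) (hd : 0 < d) (hsep : ∀ u v : ℝ, d ≤ ‖γ u - (γ v)⁻¹‖) :
    Integrable (fun p : ℝ × ℝ =>
      ‖Complex.exp ((ν : ℂ) * Complex.log ((γ p.2)⁻¹)) *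
          Complex.exp (-(aj : ℂ) / γ p.2 + γ p.2 / 4) *
          Complex.exp (γ p.1 * ((aj : ℂ) - (a₁ : ℂ) / 2)) /
          (γ p.1 - (γ p.2)⁻¹)‖ ^ 2
        * ‖deriv γ p.1‖ * (‖deriv γ p.2‖ / ‖γ p.2‖ ^ 2))
      (volume : Measure (ℝ × ℝ)) := by
  -- basic constants
  set b : ℝ := aj - a₁ / 2 with hbdef
  have hb0 : 0 < b := by simp only [hbdef]; linarith
  have hM0 : 0 ≤ M := le_trans (norm_nonneg _) (hM 0)
  have haj0 : 0 < aj := lt_of_lt_of_le ha₁ haj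
  set A : ℝ := max (max ‖γ 0‖ 1) (8 * (|ν| + 1) * M / c) with hAdef
  have hA1 : 1 ≤ A := le_trans (le_max_right _ _) (le_max_left _ _)
  have hA0 : 0 < A := lt_of_lt_of_le one_pos hA1
  have hAγ : ‖γ 0‖ ≤ A := le_trans (le_max_left _ _) (le_max_left _ _)
  have hAbig : 8 * (|ν| + 1) * M / c ≤ A := le_max_right _ _
  have hAM : |ν| * (M / A) ≤ c / 8 := by
    have h1 : 8 * (|ν| + 1) * M ≤ c * A := by
      rw [div_le_iff₀ hc] at hAbig; linarith
    rw [← mul_div_assoc, div_le_iff₀ hA0]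
    nlinarith [abs_nonneg ν, hA0, hM0]
  -- growth of γ
  have hdiff : Differentiable ℝ γ := hγ.differentiable one_ne_zero
  have hgrow : ∀ v : ℝ, ‖γ v‖ ≤ ‖γ 0‖ + M * |v| := by
    intro v
    have h := convex_univ.norm_image_sub_le_of_norm_deriv_le
      (fun x _ => (hdiff x)) (fun x _ => hM x) (Set.mem_univ 0) (Set.mem_univ v)
    simp only [sub_zero, Real.norm_eq_abs] at h
    calc ‖γ v‖ = ‖γ 0 + (γ v - γ 0)‖ := by ring_nf
      _ ≤ ‖γ 0‖ + ‖γ v - γ 0‖ := norm_add_le _ _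
      _ ≤ ‖γ 0‖ + M * |v| := by linarith
  -- logarithm bound
  have hlog : ∀ v : ℝ, -ν * Real.log ‖γ v‖
      ≤ |ν| * |Real.log r| + |ν| * Real.log A + |ν| * (M / A * |v|) := by
    intro v
    have hz : r ≤ ‖γ v‖ := hlow v
    have hz0 : (0:ℝ) < ‖γ v‖ := lt_of_lt_of_le hr hz
    have hup : Real.log ‖γ v‖ ≤ Real.log A + M / A * |v| := by
      have h1 : ‖γ v‖ ≤ A * (1 + M / A * |v|) := by
        have := hgrow v
        have : ‖γ v‖ ≤ A + M * |v| := by nlinarith [abs_nonneg v]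
        calc ‖γ v‖ ≤ A + M * |v| := this
          _ = A * (1 + M / A * |v|) := by field_simp
      calc Real.log ‖γ v‖ ≤ Real.log (A * (1 + M / A * |v|)) :=
            Real.log_le_log hz0 h1
        _ = Real.log A + Real.log (1 + M / A * |v|) := by
            rw [Real.log_mul (ne_of_gt hA0) (by positivity)]
        _ ≤ Real.log A + M / A * |v| := by
            have := Real.log_le_sub_one_of_pos
              (show (0:ℝ) < 1 + M / A * |v| by positivity)
            linarith
    have hdown : Real.log r ≤ Real.log ‖γ v‖ := Real.log_le_log hr hz
    have hLA : 0 ≤ Real.log A := Real.log_nonneg hA1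
    have ht : 0 ≤ M / A * |v| := by positivity
    rw [show |ν| * |Real.log r| + |ν| * Real.log A + |ν| * (M / A * |v|)
      = |ν| * (|Real.log r| + Real.log A + M / A * |v|) by ring]
    rcases le_or_gt 0 ν with hν0 | hν0
    · have h1 : -ν * Real.log ‖γ v‖ ≤ ν * |Real.log r| := by
        have : -Real.log ‖γ v‖ ≤ |Real.log r| := by
          rcases abs_cases (Real.log r) with ⟨h, _⟩ | ⟨h, _⟩ <;> linarith
        nlinarith
      have : ν = |ν| := (abs_of_nonneg hν0).symm
      nlinarith [abs_nonneg (Real.log r)]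
    · have hνabs : -ν = |ν| := (abs_of_neg hν0).symm
      have h1 : -ν * Real.log ‖γ v‖ ≤ |ν| * (Real.log A + M / A * |v|) := by
        rw [hνabs] at *
        exact mul_le_mul_of_nonneg_left hup (abs_nonneg ν)
      nlinarith [abs_nonneg ν, abs_nonneg (Real.log r)]
  -- the dominating function
  set S₀ : ℝ := |ν| * |Real.log r| + |ν| * Real.log A + aj / r + C / 4 + b * C with hS₀def
  set K₁ : ℝ := Real.exp (2 * S₀) / d ^ 2 * (M * (M / r ^ 2)) with hK₁def
  set g : ℝ × ℝ → ℝ :=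
    fun p => (K₁ * Real.exp (-(2 * b * c) * |p.1|)) * Real.exp (-(c / 4) * |p.2|) with hgdef
  have hgi : Integrable g := by
    rw [hgdef, Measure.volume_eq_prod]
    exact ((integrable_exp_neg_mul_abs' (by positivity)).const_mul K₁).mul_prod
      (integrable_exp_neg_mul_abs' (by positivity))
  -- pointwise bound
  have hpt : ∀ p : ℝ × ℝ,
      ‖Complex.exp ((ν : ℂ) * Complex.log ((γ p.2)⁻¹)) *
          Complex.exp (-(aj : ℂ) / γ p.2 + γ p.2 / 4) *
          Complex.exp (γ p.1 * ((aj : ℂ) - (a₁ : ℂ) / 2)) /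
          (γ p.1 - (γ p.2)⁻¹)‖ ^ 2
        * ‖deriv γ p.1‖ * (‖deriv γ p.2‖ / ‖γ p.2‖ ^ 2) ≤ g p := by
    rintro ⟨u, v⟩
    have hz : r ≤ ‖γ v‖ := hlow v
    have hz0 : (0:ℝ) < ‖γ v‖ := lt_of_lt_of_le hr hz
    have hzne : γ v ≠ 0 := by
      intro h; rw [h, norm_zero] at hz0; exact lt_irrefl _ hz0
    set E : ℝ := S₀ - b * c * |u| - c / 8 * |v| with hEdef
    -- first: the norm of the complex kernel
    have hXnorm : ‖Complex.exp ((ν : ℂ) * Complex.log ((γ v)⁻¹)) *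
          Complex.exp (-(aj : ℂ) / γ v + γ v / 4) *
          Complex.exp (γ u * ((aj : ℂ) - (a₁ : ℂ) / 2)) /
          (γ u - (γ v)⁻¹)‖ ≤ Real.exp E / d := by
      rw [norm_div, norm_mul, norm_mul,
        Complex.norm_exp, Complex.norm_exp, Complex.norm_exp,
        ← Real.exp_add, ← Real.exp_add]
      have hre1 : ((ν : ℂ) * Complex.log ((γ v)⁻¹)).re = -ν * Real.log ‖γ v‖ := by
        simp [Complex.mul_re, Complex.log_re, map_inv₀, Real.log_inv]
      have hre2 : (-(aj : ℂ) / γ v + γ v / 4).re ≤ aj / r + (γ v).re / 4 := by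
        have h4 : ((4:ℂ)) = ((4:ℝ):ℂ) := by norm_num
        rw [Complex.add_re, h4, Complex.div_ofReal_re]
        have hle : (-(aj : ℂ) / γ v).re ≤ aj / r := by
          calc (-(aj : ℂ) / γ v).re ≤ |(-(aj : ℂ) / γ v).re| := le_abs_self _
            _ ≤ ‖(-(aj : ℂ) / γ v)‖ := Complex.abs_re_le_norm _
            _ = aj / ‖γ v‖ := by
                rw [norm_div, norm_neg, Complex.norm_real, Real.norm_eq_abs,
                  abs_of_pos haj0]
            _ ≤ aj / r := by
                apply div_le_div_of_nonneg_left haj0.le hr hz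
        linarith
      have hre3 : (γ u * ((aj : ℂ) - (a₁ : ℂ) / 2)).re = (γ u).re * b := by
        have hcast : ((aj : ℂ) - (a₁ : ℂ) / 2) = ((b : ℝ) : ℂ) := by
          rw [hbdef]; push_cast; ring
        rw [hcast]
        simp [Complex.mul_re]
      -- gather the exponent bound
      have hsum : ((ν : ℂ) * Complex.log ((γ v)⁻¹)).re +
          (-(aj : ℂ) / γ v + γ v / 4).re +
          (γ u * ((aj : ℂ) - (a₁ : ℂ) / 2)).re ≤ E := by
        have h1 := hlog v
        have h2 : (γ v).re / 4 ≤ (-c * |v| + C) / 4 := by linarith [hre v]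
        have h3 : (γ u).re * b ≤ (-c * |u| + C) * b :=
          mul_le_mul_of_nonneg_right (hre u) hb0.le
        have h4 : |ν| * (M / A * |v|) ≤ c / 8 * |v| := by
          have := mul_le_mul_of_nonneg_right hAM (abs_nonneg v)
          calc |ν| * (M / A * |v|) = |ν| * (M / A) * |v| := by ring
            _ ≤ c / 8 * |v| := this
        have h3' : (γ u).re * b ≤ -(b * c * |u|) + b * C := by
          nlinarith [hre u, hb0.le, abs_nonneg u]
        rw [hre1, hre3, hEdef, hS₀def]
        clear_value b A S₀ K₁ g E
        linarith [hre2]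
      have hDd : d ≤ ‖γ u - (γ v)⁻¹‖ := by
        exact hsep u v
      exact div_le_div₀ (Real.exp_nonneg _) (Real.exp_le_exp.2 hsum) hd hDd
    -- second: the jacobian factors
    have hjv : ‖deriv γ v‖ / ‖γ v‖ ^ 2 ≤ M / r ^ 2 := by
      apply div_le_div₀ hM0 (hM v) (by positivity)
      exact pow_le_pow_left₀ hr.le hz 2
    have hfin : ‖Complex.exp ((ν : ℂ) * Complex.log ((γ v)⁻¹)) *
          Complex.exp (-(aj : ℂ) / γ v + γ v / 4) *
          Complex.exp (γ u * ((aj : ℂ) - (a₁ : ℂ) / 2)) /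
          (γ u - (γ v)⁻¹)‖ ^ 2
        * ‖deriv γ u‖ * (‖deriv γ v‖ / ‖γ v‖ ^ 2)
        ≤ (Real.exp E / d) ^ 2 * M * (M / r ^ 2) := by
      apply mul_le_mul _ hjv (by positivity) (by positivity)
      apply mul_le_mul _ (hM u) (norm_nonneg _) (by positivity)
      exact pow_le_pow_left₀ (norm_nonneg _) hXnorm 2
    refine le_trans hfin (le_of_eq ?_)
    have h2E : Real.exp E ^ 2 = Real.exp (2 * S₀) *
        (Real.exp (-(2 * b * c) * |u|) * Real.exp (-(c / 4) * |v|)) := by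
      rw [sq, ← Real.exp_add, ← Real.exp_add, ← Real.exp_add]
      congr 1
      rw [hEdef]; ring
    rw [hgdef, hK₁def, div_pow, h2E]
    ring
  -- measurability
  have hγm : Measurable γ := hγ.continuous.measurable
  have hγ'm : Measurable (deriv γ) := (hγ.continuous_deriv le_rfl).measurable
  have hmeas : AEStronglyMeasurable (fun p : ℝ × ℝ =>
      ‖Complex.exp ((ν : ℂ) * Complex.log ((γ p.2)⁻¹)) *
          Complex.exp (-(aj : ℂ) / γ p.2 + γ p.2 / 4) *
          Complex.exp (γ p.1 * ((aj : ℂ) - (a₁ : ℂ) / 2)) /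
          (γ p.1 - (γ p.2)⁻¹)‖ ^ 2
        * ‖deriv γ p.1‖ * (‖deriv γ p.2‖ / ‖γ p.2‖ ^ 2))
      (volume : Measure (ℝ × ℝ)) := by
    have m2 : Measurable fun p : ℝ × ℝ => γ p.2 := hγm.comp measurable_snd
    have m1 : Measurable fun p : ℝ × ℝ => γ p.1 := hγm.comp measurable_fst
    have mX : Measurable fun p : ℝ × ℝ =>
        Complex.exp ((ν : ℂ) * Complex.log ((γ p.2)⁻¹)) *
          Complex.exp (-(aj : ℂ) / γ p.2 + γ p.2 / 4) *
          Complex.exp (γ p.1 * ((aj : ℂ) - (a₁ : ℂ) / 2)) /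
          (γ p.1 - (γ p.2)⁻¹) := by
      apply Measurable.div
      · exact (((measurable_const.mul m2.inv.clog).cexp.mul
          ((measurable_const.div m2).add (m2.div_const 4)).cexp).mul
          (m1.mul measurable_const).cexp)
      · exact m1.sub m2.inv
    exact ((((mX.norm.pow measurable_const).mul
      ((hγ'm.comp measurable_fst).norm)).mul
      (((hγ'm.comp measurable_snd).norm).div
        ((m2.norm).pow measurable_const))).aestronglyMeasurable)
  refine hgi.mono' hmeas (Filter.Eventually.of_forall fun p => ?_)
  rw [Real.norm_of_nonneg (by positivity)]
  exact hpt p
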